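/- Let N be a positive integer, s, σ : Fin N → ℝ strictly positive with σ[1]/s[1] ≥ σ[2]/s[2] ≥ ... ≥ σ[N]/s[N], and let L be real with 0 < L < ∑ n, σ[n]. Suppose k ∈ {1,...,N} and c = (L − ∑_{n=k+1}^{N} σ[n]) / (∑_{n=1}^{k} s[n]) satisfy: c ≤ σ[k]/s[k], and (if k < N) σ[k+1]/s[k+1] < c, and c > 0. Define μ[n] = c·s[n] for n ≤ k and μ[n] = σ[n] for n > k. Then μ is feasible (∑ μ[n] = L and 0 ≤ μ[n] ≤ σ[n] for all n) and μ minimizes max_n μ[n]/s[n] over all feasible vectors, with optimal value c. -/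

import Mathlib

open Finset

theorem stmt3 (N : ℕ) (s σ : Fin N → ℝ)
    (hs : ∀ n, 0 < s n) (hσ : ∀ n, 0 < σ n)
    (hsort : ∀ m n : Fin N, m ≤ n → σ n / s n ≤ σ m / s m)
    (L : ℝ) (hL : 0 < L) (hL2 : L < ∑ n, σ n)
    (k : Fin N) (c : ℝ)
    (hc : c = (L - ∑ n ∈ univ.filter (fun n => k < n), σ n) /
              (∑ n ∈ univ.filter (fun n => n ≤ k), s n))
    (hcpos : 0 < c)
    (hck : c ≤ σ k / s k)
    (hck1 : ∀ n : Fin N, (n : ℕ) = (k : ℕ) + 1 → σ n / s n < c)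
    (μ : Fin N → ℝ) (hμ : ∀ n, μ n = if n ≤ k then c * s n else σ n) :
    (∑ n, μ n = L) ∧ (∀ n, 0 ≤ μ n ∧ μ n ≤ σ n) ∧
    (⨆ n, μ n / s n) = c ∧
    (∀ ν : Fin N → ℝ, (∑ n, ν n = L) → (∀ n, 0 ≤ ν n ∧ ν n ≤ σ n) →
      c ≤ ⨆ n, ν n / s n) := by
  haveI : Nonempty (Fin N) := ⟨k⟩
  set A := univ.filter (fun n : Fin N => n ≤ k) with hA
  set B := univ.filter (fun n : Fin N => k < n) with hB
  have hSs : 0 < ∑ n ∈ A, s n :=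
    Finset.sum_pos (fun n _ => hs n) ⟨k, by simp [hA]⟩
  have hcSs : c * ∑ n ∈ A, s n = L - ∑ n ∈ B, σ n := by
    rw [hc]; field_simp
  have hsplit : ∀ f : Fin N → ℝ, ∑ n, f n = ∑ n ∈ A, f n + ∑ n ∈ B, f n := by
    intro f
    rw [hA, hB, ← Finset.sum_filter_add_sum_filter_not univ (fun n => n ≤ k) f]
    congr 1
    apply Finset.sum_congr _ (fun _ _ => rfl)
    ext n; simp [not_le]
  -- bounds for μ
  have hbound : ∀ n, 0 ≤ μ n ∧ μ n ≤ σ n := by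
    intro n
    rw [hμ n]
    by_cases hn : n ≤ k
    · simp only [hn, if_true]
      constructor
      · exact mul_nonneg hcpos.le (hs n).le
      · have h1 : c ≤ σ n / s n := hck.trans (hsort n k hn)
        calc c * s n ≤ (σ n / s n) * s n := by
              exact mul_le_mul_of_nonneg_right h1 (hs n).le
          _ = σ n := div_mul_cancel₀ _ (hs n).ne'
    · simp only [hn, if_false]
      exact ⟨(hσ n).le, le_refl _⟩
  -- sum of μ
  have hsum : ∑ n, μ n = L := by
    rw [hsplit μ]
    have h1 : ∑ n ∈ A, μ n = c * ∑ n ∈ A, s n := by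
      rw [Finset.mul_sum]
      apply Finset.sum_congr rfl
      intro n hn
      rw [hμ n, if_pos (by simpa [hA] using hn)]
    have h2 : ∑ n ∈ B, μ n = ∑ n ∈ B, σ n := by
      apply Finset.sum_congr rfl
      intro n hn
      rw [hμ n, if_neg (by simpa [hB, not_le] using hn)]
    rw [h1, h2, hcSs]; ring
  refine ⟨hsum, hbound, ?_, ?_⟩
  · -- sup = c
    apply le_antisymm
    · apply ciSup_le
      intro n
      rw [hμ n]
      by_cases hn : n ≤ k
      · rw [if_pos hn, mul_div_assoc, div_self (hs n).ne', mul_one]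
      · rw [if_neg hn]
        push_neg at hn
        have hklt : (k : ℕ) + 1 ≤ (n : ℕ) := hn
        have hlt : (k : ℕ) + 1 < N := lt_of_le_of_lt hklt n.isLt
        set m : Fin N := ⟨(k : ℕ) + 1, hlt⟩ with hm
        have h1 : σ n / s n ≤ σ m / s m := hsort m n hklt
        exact (h1.trans_lt (hck1 m rfl)).le
    · have h1 : μ k / s k = c := by
        rw [hμ k, if_pos (le_refl k), mul_div_assoc, div_self (hs k).ne', mul_one]
      rw [← h1]
      exact le_ciSup (f := fun n => μ n / s n) (Set.Finite.bddAbove (Set.finite_range _)) k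
  · -- optimality
    intro ν hνsum hνb
    set M := ⨆ n, ν n / s n with hM
    have hMub : ∀ n, ν n ≤ M * s n := by
      intro n
      have := le_ciSup (Set.Finite.bddAbove (Set.finite_range (fun n => ν n / s n))) n
      rw [← hM] at this
      exact (div_le_iff₀ (hs n)).mp this
    have hLle : L ≤ M * (∑ n ∈ A, s n) + ∑ n ∈ B, σ n := by
      rw [← hνsum, hsplit ν, Finset.mul_sum]
      apply add_le_add
      · exact Finset.sum_le_sum (fun n _ => hMub n)
      · exact Finset.sum_le_sum (fun n _ => (hνb n).2)
    have : c * ∑ n ∈ A, s n ≤ M * ∑ n ∈ A, s n := by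
      rw [hcSs]; linarith
    exact le_of_mul_le_mul_right this hSs
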